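/- Define L(r,n,A) := ((-1)^{n+r}/12) · ((n-1)!/(r+1)!) · Σ_{I ⊆ [n], #I = r} M_I(A)^2 for an r×n integer matrix A with zero row sums, where M_I(A) is the r×r minor on columns I. Then for an r×(n+1) zero-row-sum matrix A of the special form whose last column is (a_{n+1}, 0, …, 0)^T with bottom-left block B (an (r−1)×n zero-row-sum matrix) and first row (a_1,…,a_n,a_{n+1}), the identity L(r, n+1, A) = a_{n+1}^2 · L(r−1, n, B) − Σ_{i=1}^n L(r, n, A(i)) holds, where A(i) is the r×n matrix with first row (a_1,…,a_{i-1}, a_i+a_{n+1}, a_{i+1},…,a_n) and remaining rows B. -/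

import Mathlib

/-- The r×r minor of an r×n integer matrix on a set I of r columns (columns in
increasing order); junk value 0 if #I ≠ r. -/
def minorOn {r n : ℕ} (A : Matrix (Fin r) (Fin n) ℤ) (I : Finset (Fin n)) : ℤ :=
  if h : I.card = r then (A.submatrix id (I.orderEmbOfFin h)).det else 0

/-- The leading term L(r, n, A) = ((-1)^{n+r}/12)·((n-1)!/(r+1)!)·Σ_{#I=r} M_I(A)². -/
noncomputable def Lterm {r n : ℕ} (A : Matrix (Fin r) (Fin n) ℤ) : ℚ :=
  ((-1 : ℚ) ^ (n + r) / 12) * ((n - 1).factorial / ((r + 1).factorial : ℚ)) *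
    ∑ I ∈ Finset.univ.powersetCard r, ((minorOn A I : ℤ) : ℚ) ^ 2

open Finset Matrix

/-- Step 1: expand det (A * Bᵀ) as a sum over functions. -/
theorem det_mul_transpose_expand {m n : ℕ} (A B : Matrix (Fin m) (Fin n) ℤ) :
    (A * Bᵀ).det = ∑ f ∈ Fintype.piFinset (fun _ : Fin m => (univ : Finset (Fin n))),
      (∏ i, B i (f i)) * (A.submatrix id f).det := by
  simp only [Matrix.det_apply, Matrix.mul_apply, Matrix.transpose_apply]
  have : ∀ σ : Equiv.Perm (Fin m), (∏ i, ∑ j, A (σ i) j * B i j)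
      = ∑ f ∈ Fintype.piFinset (fun _ : Fin m => (univ : Finset (Fin n))),
        ∏ i, A (σ i) (f i) * B i (f i) := by
    intro σ
    rw [Finset.prod_univ_sum]
  simp_rw [this, Finset.smul_sum]
  rw [Finset.sum_comm]
  refine Finset.sum_congr rfl fun f _ => ?_
  rw [Finset.mul_sum]
  refine Finset.sum_congr rfl fun σ _ => ?_
  rw [Finset.prod_mul_distrib]
  simp only [Matrix.submatrix_apply, id_eq, zsmul_eq_mul]
  simp only [Units.smul_def, zsmul_eq_mul]; ring

theorem sum_perm_eq_det_mul_det {m n : ℕ} (A B : Matrix (Fin m) (Fin n) ℤ)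
    (J : Finset (Fin n)) (hJ : J.card = m) :
    ∑ σ : Equiv.Perm (Fin m),
        (∏ i, B i (J.orderEmbOfFin hJ (σ i))) *
          (A.submatrix id (fun i => J.orderEmbOfFin hJ (σ i))).det
      = (A.submatrix id (J.orderEmbOfFin hJ)).det * (B.submatrix id (J.orderEmbOfFin hJ)).det := by
  have h1 : ∀ σ : Equiv.Perm (Fin m),
      (A.submatrix id (fun i => J.orderEmbOfFin hJ (σ i))).det
        = (Equiv.Perm.sign σ : ℤ) * (A.submatrix id (J.orderEmbOfFin hJ)).det := by
    intro σ
    have : (A.submatrix id (fun i => J.orderEmbOfFin hJ (σ i)))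
        = (A.submatrix id (J.orderEmbOfFin hJ)).submatrix id σ := by
      ext i j; simp [Matrix.submatrix_apply]
    rw [this, Matrix.det_permute']; push_cast; ring
  simp_rw [h1]
  have h2 : ∑ σ : Equiv.Perm (Fin m),
      ((Equiv.Perm.sign σ : ℤ)) * ∏ i, B i (J.orderEmbOfFin hJ (σ i))
      = (B.submatrix id (J.orderEmbOfFin hJ)).det := by
    rw [← Matrix.det_transpose (B.submatrix id (J.orderEmbOfFin hJ)), Matrix.det_apply]
    refine Finset.sum_congr rfl fun σ _ => ?_
    simp only [Matrix.transpose_apply, Matrix.submatrix_apply, id_eq, Units.smul_def, zsmul_eq_mul]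
    push_cast
    ring
  rw [← h2, Finset.mul_sum]
  refine Finset.sum_congr rfl fun σ _ => ?_
  ring

theorem sum_inj_fiber {m n : ℕ} (g : (Fin m → Fin n) → ℤ)
    (J : Finset (Fin n)) (hJ : J.card = m) :
    ∑ f ∈ (Fintype.piFinset (fun _ : Fin m => (univ : Finset (Fin n)))).filter
        (fun f => Function.Injective f ∧ univ.image f = J), g f
      = ∑ σ : Equiv.Perm (Fin m), g (fun i => J.orderEmbOfFin hJ (σ i)) := by
  refine Finset.sum_bij' (i := fun f hf => ?_) (j := fun σ _ => fun i => J.orderEmbOfFin hJ (σ i))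
    ?_ ?_ ?_ ?_ ?_
  · -- construct the permutation from f
    simp only [Finset.mem_filter] at hf
    refine Equiv.ofBijective (fun i => (J.orderIsoOfFin hJ).symm ⟨f i, ?_⟩) ?_
    · rw [← hf.2.2]; exact Finset.mem_image_of_mem f (Finset.mem_univ i)
    · rw [← Finite.injective_iff_bijective]
      intro x y hxy
      apply hf.2.1
      have := congrArg (J.orderIsoOfFin hJ) hxy
      simpa using this
  · intro a ha; exact Finset.mem_univ _
  · -- j maps into filter set
    intro σ _
    simp only [Finset.mem_filter]
    refine ⟨by simp, ?_, ?_⟩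
    · exact fun x y hxy => σ.injective ((J.orderEmbOfFin hJ).injective hxy)
    · ext x
      simp only [Finset.mem_image, Finset.mem_univ, true_and]
      constructor
      · rintro ⟨i, rfl⟩; exact Finset.orderEmbOfFin_mem J hJ (σ i)
      · intro hx
        have : x ∈ Set.range (J.orderEmbOfFin hJ) := by
          rw [Finset.range_orderEmbOfFin]; exact hx
        obtain ⟨i, rfl⟩ := this
        exact ⟨σ.symm i, by simp⟩
  · -- left inverse
    intro f hf
    funext i
    simp only [Equiv.ofBijective_apply]
    rw [← Finset.coe_orderIsoOfFin_apply, OrderIso.apply_symm_apply]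
  · -- right inverse
    intro σ _
    ext i
    simp only [Equiv.ofBijective_apply]
    have : (⟨J.orderEmbOfFin hJ (σ i), Finset.orderEmbOfFin_mem J hJ (σ i)⟩ : J)
        = J.orderIsoOfFin hJ (σ i) := by
      ext; simp
    rw [this, OrderIso.symm_apply_apply]
  · intro f hf
    congr 1
    funext i
    simp only [Equiv.ofBijective_apply]
    rw [← Finset.coe_orderIsoOfFin_apply, OrderIso.apply_symm_apply]

set_option maxHeartbeats 1000000 in
theorem cauchy_binet {m n : ℕ} (A B : Matrix (Fin m) (Fin n) ℤ) :
    (A * Bᵀ).det = ∑ J ∈ (univ : Finset (Fin n)).powersetCard m, minorOn A J * minorOn B J := by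
  rw [det_mul_transpose_expand]
  -- drop non-injective terms
  rw [← Finset.sum_filter_of_ne (p := fun f => Function.Injective f)
    (by
      intro f _ hne
      by_contra hinj
      apply hne
      obtain ⟨x, y, hxy, hne'⟩ := Function.not_injective_iff.mp hinj
      rw [Matrix.det_zero_of_column_eq hne' (fun k => by simp [Matrix.submatrix_apply, hxy]),
        mul_zero])]
  -- fiberwise over the image
  rw [← Finset.sum_fiberwise_of_maps_to (g := fun f => Finset.image f univ)
    (t := (univ : Finset (Fin n)).powersetCard m)
    (by
      intro f hf
      simp only [Finset.mem_filter] at hf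
      rw [Finset.mem_powersetCard]
      exact ⟨Finset.subset_univ _,
        by rw [Finset.card_image_of_injective _ hf.2, Finset.card_univ, Fintype.card_fin]⟩)]
  refine Finset.sum_congr rfl fun J hJmem => ?_
  have hJ : J.card = m := (Finset.mem_powersetCard.mp hJmem).2
  rw [Finset.filter_filter]
  rw [sum_inj_fiber _ J hJ, sum_perm_eq_det_mul_det A B J hJ]
  rw [minorOn, minorOn, dif_pos hJ, dif_pos hJ]

/-- Matrix with first row `u` on top of `B`. -/
def consM {r n : ℕ} (u : Fin n → ℤ) (B : Matrix (Fin r) (Fin n) ℤ) :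
    Matrix (Fin (r + 1)) (Fin n) ℤ :=
  Matrix.of (Fin.cons u B)

theorem consM_submatrix {r n m : ℕ} (u : Fin n → ℤ) (B : Matrix (Fin r) (Fin n) ℤ)
    (e : Fin m → Fin n) :
    (consM u B).submatrix id e
      = Matrix.of (Fin.cons (fun k => u (e k)) (fun l k => B l (e k))) := by
  ext i j
  refine Fin.cases ?_ (fun l => ?_) i <;> simp [consM, Matrix.submatrix_apply] <;> rfl

theorem updateRow_consM {r m : ℕ} (u w : Fin m → ℤ) (M : Fin r → Fin m → ℤ) :
    (Matrix.of (Fin.cons w M)).updateRow 0 u = Matrix.of (Fin.cons u M) := by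
  ext i j
  refine Fin.cases ?_ (fun l => ?_) i
  · simp [Matrix.updateRow_self]
  · rw [Matrix.updateRow_ne (Fin.succ_ne_zero l)]
    simp

theorem det_cons_add {r : ℕ} (u v : Fin (r + 1) → ℤ) (M : Fin r → Fin (r + 1) → ℤ) :
    (Matrix.of (Fin.cons (u + v) M)).det
      = (Matrix.of (Fin.cons u M)).det + (Matrix.of (Fin.cons v M)).det := by
  rw [← updateRow_consM u u M, ← updateRow_consM v u M, ← updateRow_consM (u + v) u M]
  exact Matrix.det_updateRow_add _ 0 u v

theorem det_cons_smul {r : ℕ} (c : ℤ) (u : Fin (r + 1) → ℤ) (M : Fin r → Fin (r + 1) → ℤ) :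
    (Matrix.of (Fin.cons (c • u) M)).det = c * (Matrix.of (Fin.cons u M)).det := by
  rw [← updateRow_consM u u M, ← updateRow_consM (c • u) u M]
  exact Matrix.det_updateRow_smul _ 0 c u

theorem det_cons_sum' {r : ℕ} {ι : Type*} [DecidableEq ι] (s : Finset ι)
    (u : ι → Fin (r + 1) → ℤ) (M : Fin r → Fin (r + 1) → ℤ) :
    (Matrix.of (Fin.cons (∑ i ∈ s, u i) M)).det
      = ∑ i ∈ s, (Matrix.of (Fin.cons (u i) M)).det := by
  induction' s using Finset.induction_on with i s hi ih
  · rw [Finset.sum_empty, Finset.sum_empty]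
    refine Matrix.det_eq_zero_of_row_eq_zero 0 fun j => ?_
    simp
  · rw [Finset.sum_insert hi, Finset.sum_insert hi, det_cons_add, ih]

theorem det_cons_sum {r k : ℕ} (u : Fin k → Fin (r + 1) → ℤ) (M : Fin r → Fin (r + 1) → ℤ) :
    (Matrix.of (Fin.cons (∑ i, u i) M)).det = ∑ i, (Matrix.of (Fin.cons (u i) M)).det :=
  det_cons_sum' Finset.univ u M

theorem minor_cons_add {r n : ℕ} (u v : Fin n → ℤ) (B : Matrix (Fin r) (Fin n) ℤ)
    (J : Finset (Fin n)) :
    minorOn (consM (u + v) B) J = minorOn (consM u B) J + minorOn (consM v B) J := by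
  unfold minorOn
  by_cases h : J.card = r + 1
  · rw [dif_pos h, dif_pos h, dif_pos h, consM_submatrix, consM_submatrix, consM_submatrix]
    have : (fun k => (u + v) (J.orderEmbOfFin h k)) =
        (fun k => u (J.orderEmbOfFin h k)) + (fun k => v (J.orderEmbOfFin h k)) := rfl
    rw [this, det_cons_add]
  · rw [dif_neg h, dif_neg h, dif_neg h]; ring

theorem minor_cons_smul {r n : ℕ} (c : ℤ) (u : Fin n → ℤ) (B : Matrix (Fin r) (Fin n) ℤ)
    (J : Finset (Fin n)) :
    minorOn (consM (c • u) B) J = c * minorOn (consM u B) J := by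
  unfold minorOn
  by_cases h : J.card = r + 1
  · rw [dif_pos h, dif_pos h, consM_submatrix, consM_submatrix]
    have : (fun k => (c • u) (J.orderEmbOfFin h k)) =
        c • (fun k => u (J.orderEmbOfFin h k)) := rfl
    rw [this, det_cons_smul]
  · rw [dif_neg h, dif_neg h]; ring

theorem minor_cons_sum {r n k : ℕ} (u : Fin k → Fin n → ℤ) (B : Matrix (Fin r) (Fin n) ℤ)
    (J : Finset (Fin n)) :
    minorOn (consM (∑ i, u i) B) J = ∑ i, minorOn (consM (u i) B) J := by
  unfold minorOn
  by_cases h : J.card = r + 1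
  · simp only [dif_pos h, consM_submatrix]
    have : (fun k' => (∑ i, u i) (J.orderEmbOfFin h k')) =
        ∑ i, (fun k' => (u i) (J.orderEmbOfFin h k')) := by
      funext k'; simp
    rw [this, det_cons_sum]
  · simp only [dif_neg h, Finset.sum_const_zero]

/-- indicator row -/
def chi {n : ℕ} (i : Fin n) : Fin n → ℤ := fun j => if j = i then 1 else 0

theorem sum_chi {n : ℕ} : ∑ i : Fin n, chi i = fun _ => (1 : ℤ) := by
  funext j
  simp only [Finset.sum_apply, chi]
  rw [Finset.sum_ite_eq Finset.univ j (fun _ => (1:ℤ))]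
  simp

theorem minor_cons_chi_not_mem {r n : ℕ} (B : Matrix (Fin r) (Fin n) ℤ) {J : Finset (Fin n)}
    {i : Fin n} (hi : i ∉ J) : minorOn (consM (chi i) B) J = 0 := by
  unfold minorOn
  by_cases h : J.card = r + 1
  · rw [dif_pos h, consM_submatrix]
    refine Matrix.det_eq_zero_of_row_eq_zero 0 fun k => ?_
    have : J.orderEmbOfFin h k ≠ i := fun hc => hi (hc ▸ Finset.orderEmbOfFin_mem J h k)
    simp [chi, this]
  · rw [dif_neg h]

theorem minor_cons_chi_sq {r n : ℕ} (B : Matrix (Fin r) (Fin n) ℤ) {J : Finset (Fin n)}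
    (hJ : J.card = r + 1) {i : Fin n} (hi : i ∈ J) :
    minorOn (consM (chi i) B) J ^ 2 = minorOn B (J.erase i) ^ 2 := by
  have hJe : (J.erase i).card = r := by rw [Finset.card_erase_of_mem hi, hJ]; rfl
  set e := J.orderEmbOfFin hJ with he
  set k₀ : Fin (r + 1) := (J.orderIsoOfFin hJ).symm ⟨i, hi⟩ with hk₀
  have hek₀ : e k₀ = i := by
    rw [he, ← Finset.coe_orderIsoOfFin_apply, hk₀, OrderIso.apply_symm_apply]
  have hcomp : (fun m => e (k₀.succAbove m)) = (J.erase i).orderEmbOfFin hJe := by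
    refine Finset.orderEmbOfFin_unique hJe (fun m => ?_)
      ((e.strictMono.comp (Fin.strictMono_succAbove k₀)))
    rw [Finset.mem_erase]
    refine ⟨fun hc => ?_, Finset.orderEmbOfFin_mem J hJ _⟩
    · exact Fin.succAbove_ne k₀ m (e.injective (hc.trans hek₀.symm))
  have hdet : (consM (chi i) B).submatrix id e
      = Matrix.of (Fin.cons (fun k => chi i (e k)) (fun l k => B l (e k))) :=
    consM_submatrix _ _ _
  unfold minorOn
  rw [dif_pos hJ, dif_pos hJe, hdet]
  rw [Matrix.det_succ_row_zero]
  rw [Finset.sum_eq_single k₀ ?_ (by simp)]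
  · have h0 : chi i (e k₀) = 1 := by rw [hek₀]; simp [chi]
    have hsub : (Matrix.of (Fin.cons (fun k => chi i (e k)) (fun l k => B l (e k)))).submatrix
        Fin.succ k₀.succAbove = B.submatrix id ((J.erase i).orderEmbOfFin hJe) := by
      ext l m
      simp [Matrix.submatrix_apply, ← hcomp]
    simp only [Matrix.of_apply, Fin.cons_zero] at *
    rw [h0, hsub]
    ring_nf
    rw [mul_comm ((k₀:ℕ)) 2, pow_mul]
    simp
  · intro k _ hk
    have : chi i (e k) = 0 := by
      have : e k ≠ i := fun hc => hk (e.injective (hc.trans hek₀.symm))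
      simp [chi, this]
    simp only [Matrix.of_apply, Fin.cons_zero]
    rw [this, mul_zero, zero_mul]

theorem counting {r n : ℕ} (B : Matrix (Fin r) (Fin n) ℤ) :
    ∑ J ∈ (univ : Finset (Fin n)).powersetCard (r + 1), ∑ i ∈ J, minorOn B (J.erase i) ^ 2
      = ∑ I ∈ (univ : Finset (Fin n)).powersetCard r, ((n : ℤ) - r) * minorOn B I ^ 2 := by
  have hR : ∀ I ∈ (univ : Finset (Fin n)).powersetCard r,
      ((n : ℤ) - r) * minorOn B I ^ 2 = ∑ _i ∈ Iᶜ, minorOn B I ^ 2 := by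
    intro I hI
    have hIc : I.card = r := (Finset.mem_powersetCard.mp hI).2
    have hrn : r ≤ n := by
      rw [← hIc]
      simpa using Finset.card_le_univ I
    rw [Finset.sum_const, Finset.card_compl, hIc, Fintype.card_fin, nsmul_eq_mul]
    push_cast [hrn]
    ring
  rw [Finset.sum_congr rfl hR, Finset.sum_sigma', Finset.sum_sigma']
  refine Finset.sum_bij' (i := fun p hp => ⟨p.1.erase p.2, p.2⟩)
    (j := fun p hp => ⟨insert p.2 p.1, p.2⟩) ?_ ?_ ?_ ?_ ?_
  · rintro ⟨J, i⟩ hp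
    simp only [Finset.mem_sigma, Finset.mem_powersetCard] at hp ⊢
    refine ⟨⟨Finset.subset_univ _, ?_⟩, ?_⟩
    · rw [Finset.card_erase_of_mem hp.2, (Finset.mem_powersetCard.mp
        (Finset.mem_powersetCard.mpr hp.1)).2]
      rfl
    · simp
  · rintro ⟨I, i⟩ hp
    simp only [Finset.mem_sigma, Finset.mem_powersetCard, Finset.mem_compl] at hp
    simp only [Finset.mem_sigma, Finset.mem_powersetCard]
    exact ⟨⟨Finset.subset_univ _, by rw [Finset.card_insert_of_notMem hp.2, hp.1.2]⟩,
      Finset.mem_insert_self _ _⟩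
  · rintro ⟨J, i⟩ hp
    simp only [Finset.mem_sigma] at hp
    exact Sigma.ext (by simp [Finset.insert_erase hp.2]) (by simp)
  · rintro ⟨I, i⟩ hp
    simp only [Finset.mem_sigma, Finset.mem_compl] at hp
    exact Sigma.ext (by simp [Finset.erase_insert hp.2]) (by simp)
  · rintro ⟨J, i⟩ hp
    rfl

theorem image_preimage_castSucc {n : ℕ} (S : Finset (Fin (n + 1))) (h : Fin.last n ∉ S) :
    (S.preimage Fin.castSucc ((Fin.castSucc_injective n).injOn)).image Fin.castSucc = S := by
  ext x
  simp only [Finset.mem_image, Finset.mem_preimage]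
  constructor
  · rintro ⟨y, hy, rfl⟩; exact hy
  · intro hx
    obtain ⟨y, rfl⟩ := Fin.exists_castSucc_eq.mpr (fun hc => h (hc ▸ hx))
    exact ⟨y, hx, rfl⟩

theorem card_preimage_castSucc {n : ℕ} (S : Finset (Fin (n + 1))) (h : Fin.last n ∉ S) :
    (S.preimage Fin.castSucc ((Fin.castSucc_injective n).injOn)).card = S.card := by
  conv_rhs => rw [← image_preimage_castSucc S h]
  rw [Finset.card_image_of_injective _ (Fin.castSucc_injective n)]

/-- (a): minor of the big matrix on a column set avoiding the last column. -/
theorem minor_big_image {r n : ℕ} (B : Matrix (Fin r) (Fin n) ℤ) (a : Fin n → ℤ) (aLast : ℤ)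
    (J : Finset (Fin n)) (hJ : J.card = r + 1) :
    minorOn (Matrix.of (Fin.cons (Fin.snoc a aLast) (fun i : Fin r => Fin.snoc (B i) 0))
        : Matrix (Fin (r + 1)) (Fin (n + 1)) ℤ) (J.image Fin.castSucc)
      = minorOn (consM a B) J := by
  have himg : (J.image Fin.castSucc).card = r + 1 := by
    rw [Finset.card_image_of_injective _ (Fin.castSucc_injective n), hJ]
  have hemb : ⇑((J.image Fin.castSucc).orderEmbOfFin himg)
      = fun k => Fin.castSucc (J.orderEmbOfFin hJ k) := by
    refine (Finset.orderEmbOfFin_unique himg (fun k => Finset.mem_image_of_mem _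
      (Finset.orderEmbOfFin_mem J hJ k))
      (Fin.strictMono_castSucc.comp (J.orderEmbOfFin hJ).strictMono)).symm
  unfold minorOn
  rw [dif_pos himg, dif_pos hJ, hemb]
  congr 1
  ext i k
  refine Fin.cases ?_ (fun l => ?_) i <;>
    simp [consM, Matrix.submatrix_apply, Fin.snoc_castSucc] <;> rfl

/-- (b): squared minor of the big matrix on a column set containing the last column. -/
theorem minor_big_insert_sq {r n : ℕ} (B : Matrix (Fin r) (Fin n) ℤ) (a : Fin n → ℤ) (aLast : ℤ)
    (J : Finset (Fin n)) (hJ : J.card = r) :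
    minorOn (Matrix.of (Fin.cons (Fin.snoc a aLast) (fun i : Fin r => Fin.snoc (B i) 0))
        : Matrix (Fin (r + 1)) (Fin (n + 1)) ℤ) (insert (Fin.last n) (J.image Fin.castSucc)) ^ 2
      = aLast ^ 2 * minorOn B J ^ 2 := by
  have hlast : Fin.last n ∉ J.image Fin.castSucc := by
    simp only [Finset.mem_image]
    rintro ⟨y, _, hy⟩
    exact (Fin.castSucc_lt_last y).ne hy
  have hins : (insert (Fin.last n) (J.image Fin.castSucc)).card = r + 1 := by
    rw [Finset.card_insert_of_notMem hlast,
      Finset.card_image_of_injective _ (Fin.castSucc_injective n), hJ]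
  have hmono : StrictMono (Fin.snoc (fun k => Fin.castSucc (J.orderEmbOfFin hJ k))
      (Fin.last n) : Fin (r + 1) → Fin (n + 1)) := by
    intro x y
    refine Fin.lastCases ?_ (fun y' => ?_) y
    · refine Fin.lastCases ?_ (fun x' => ?_) x
      · intro hc; exact absurd hc (lt_irrefl _)
      · intro _
        rw [Fin.snoc_castSucc, Fin.snoc_last]
        exact Fin.castSucc_lt_last _
    · refine Fin.lastCases ?_ (fun x' => ?_) x
      · intro hc
        exact absurd (hc.trans (Fin.castSucc_lt_last y')) (lt_irrefl _)
      · intro hxy'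
        rw [Fin.snoc_castSucc, Fin.snoc_castSucc]
        exact Fin.strictMono_castSucc ((J.orderEmbOfFin hJ).strictMono
          (Fin.castSucc_lt_castSucc_iff.mp hxy'))
  have hemb : ⇑((insert (Fin.last n) (J.image Fin.castSucc)).orderEmbOfFin hins)
      = Fin.snoc (fun k => Fin.castSucc (J.orderEmbOfFin hJ k)) (Fin.last n) := by
    refine (Finset.orderEmbOfFin_unique hins (fun k => ?_) hmono).symm
    refine Fin.lastCases ?_ (fun k' => ?_) k
    · rw [Fin.snoc_last]; exact Finset.mem_insert_self _ _
    · rw [Fin.snoc_castSucc]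
      exact Finset.mem_insert_of_mem (Finset.mem_image_of_mem _ (Finset.orderEmbOfFin_mem J hJ k'))
  unfold minorOn
  rw [dif_pos hins, dif_pos hJ, hemb]
  set C := (Matrix.of (Fin.cons (Fin.snoc a aLast) (fun i : Fin r => Fin.snoc (B i) 0))
      : Matrix (Fin (r + 1)) (Fin (n + 1)) ℤ).submatrix id
      (Fin.snoc (fun k => Fin.castSucc (J.orderEmbOfFin hJ k)) (Fin.last n)) with hC
  have hdet : C.det = (-1) ^ ((0 : Fin (r+1)) + (Fin.last r) : ℕ) * aLast *
      (B.submatrix id (J.orderEmbOfFin hJ)).det := by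
    rw [Matrix.det_succ_column C (Fin.last r)]
    rw [Finset.sum_eq_single 0 ?_ (by simp)]
    · have h00 : C 0 (Fin.last r) = aLast := by
        simp [hC, Matrix.submatrix_apply, Fin.snoc_last]
      have hsub : C.submatrix (Fin.succAbove 0) ((Fin.last r).succAbove)
          = B.submatrix id (J.orderEmbOfFin hJ) := by
        ext l k
        simp [hC, Matrix.submatrix_apply, Fin.succAbove_zero, Fin.succAbove_last,
          Fin.snoc_castSucc]
      rw [h00, hsub]
    · intro i _ hi
      obtain ⟨l, rfl⟩ := Fin.exists_succ_eq.mpr hi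
      have : C l.succ (Fin.last r) = 0 := by
        simp [hC, Matrix.submatrix_apply, Fin.snoc_last]
      rw [this, mul_zero, zero_mul]
  rw [hdet]
  have hsgn : ((-1 : ℤ) ^ ((((0 : Fin (r+1)) : ℕ)) + ((Fin.last r) : ℕ))) ^ 2 = 1 := by
    rw [← pow_mul, mul_comm, pow_mul]
    simp
  rw [mul_pow, mul_pow, hsgn, one_mul]

theorem sum_minor_split {r n : ℕ} (B : Matrix (Fin r) (Fin n) ℤ) (a : Fin n → ℤ) (aLast : ℤ) :
    ∑ I ∈ (univ : Finset (Fin (n + 1))).powersetCard (r + 1),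
        minorOn (Matrix.of (Fin.cons (Fin.snoc a aLast) (fun i : Fin r => Fin.snoc (B i) 0))
          : Matrix (Fin (r + 1)) (Fin (n + 1)) ℤ) I ^ 2
      = ∑ J ∈ (univ : Finset (Fin n)).powersetCard (r + 1), minorOn (consM a B) J ^ 2
        + aLast ^ 2 * ∑ I ∈ (univ : Finset (Fin n)).powersetCard r, minorOn B I ^ 2 := by
  classical
  rw [← Finset.sum_filter_add_sum_filter_not
    ((univ : Finset (Fin (n + 1))).powersetCard (r + 1)) (fun I => Fin.last n ∈ I)]
  rw [add_comm (∑ J ∈ (univ : Finset (Fin n)).powersetCard (r + 1), minorOn (consM a B) J ^ 2)]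
  congr 1
  · -- sets containing the last column
    rw [Finset.mul_sum]
    refine Finset.sum_bij' (i := fun I hI => (I.erase (Fin.last n)).preimage Fin.castSucc
        ((Fin.castSucc_injective n).injOn))
      (j := fun J _ => insert (Fin.last n) (J.image Fin.castSucc)) ?_ ?_ ?_ ?_ ?_
    · intro I hI
      simp only [Finset.mem_filter, Finset.mem_powersetCard] at hI
      rw [Finset.mem_powersetCard]
      refine ⟨Finset.subset_univ _, ?_⟩
      rw [card_preimage_castSucc _ (Finset.notMem_erase _ _),
        Finset.card_erase_of_mem hI.2, hI.1.2]
      rfl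
    · intro J hJ
      simp only [Finset.mem_powersetCard] at hJ
      simp only [Finset.mem_filter, Finset.mem_powersetCard]
      have hlast : Fin.last n ∉ J.image Fin.castSucc := by
        simp only [Finset.mem_image]
        rintro ⟨y, _, hy⟩
        exact (Fin.castSucc_lt_last y).ne hy
      refine ⟨⟨Finset.subset_univ _, ?_⟩, Finset.mem_insert_self _ _⟩
      rw [Finset.card_insert_of_notMem hlast,
        Finset.card_image_of_injective _ (Fin.castSucc_injective n), hJ.2]
    · intro I hI
      simp only [Finset.mem_filter] at hI
      rw [image_preimage_castSucc _ (Finset.notMem_erase _ _), Finset.insert_erase hI.2]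
    · intro J hJ
      have hlast : Fin.last n ∉ J.image Fin.castSucc := by
        simp only [Finset.mem_image]
        rintro ⟨y, _, hy⟩
        exact (Fin.castSucc_lt_last y).ne hy
      rw [Finset.erase_insert hlast]
      ext x
      simp only [Finset.mem_preimage, Finset.mem_image]
      constructor
      · rintro ⟨y, hy, hxy⟩
        rwa [Fin.castSucc_injective n hxy] at hy
      · intro hx; exact ⟨x, hx, rfl⟩
    · intro I hI
      simp only [Finset.mem_filter, Finset.mem_powersetCard] at hI
      have hJcard : ((I.erase (Fin.last n)).preimage Fin.castSucc
          ((Fin.castSucc_injective n).injOn)).card = r := by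
        rw [card_preimage_castSucc _ (Finset.notMem_erase _ _),
          Finset.card_erase_of_mem hI.2, hI.1.2]
        rfl
      rw [← minor_big_insert_sq B a aLast _ hJcard,
        image_preimage_castSucc _ (Finset.notMem_erase _ _), Finset.insert_erase hI.2]
  · -- sets avoiding the last column
    refine Finset.sum_bij' (i := fun I hI => I.preimage Fin.castSucc
        ((Fin.castSucc_injective n).injOn))
      (j := fun J _ => J.image Fin.castSucc) ?_ ?_ ?_ ?_ ?_
    · intro I hI
      simp only [Finset.mem_filter, Finset.mem_powersetCard] at hI
      rw [Finset.mem_powersetCard]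
      exact ⟨Finset.subset_univ _, by rw [card_preimage_castSucc _ hI.2, hI.1.2]⟩
    · intro J hJ
      simp only [Finset.mem_powersetCard] at hJ
      simp only [Finset.mem_filter, Finset.mem_powersetCard]
      refine ⟨⟨Finset.subset_univ _, ?_⟩, ?_⟩
      · rw [Finset.card_image_of_injective _ (Fin.castSucc_injective n), hJ.2]
      · simp only [Finset.mem_image]
        rintro ⟨y, _, hy⟩
        exact (Fin.castSucc_lt_last y).ne hy
    · intro I hI
      simp only [Finset.mem_filter] at hI
      rw [image_preimage_castSucc _ hI.2]
    · intro J hJ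
      ext x
      simp only [Finset.mem_preimage, Finset.mem_image]
      constructor
      · rintro ⟨y, hy, hxy⟩
        rwa [Fin.castSucc_injective n hxy] at hy
      · intro hx; exact ⟨x, hx, rfl⟩
    · intro I hI
      simp only [Finset.mem_filter, Finset.mem_powersetCard] at hI
      have hJcard : (I.preimage Fin.castSucc ((Fin.castSucc_injective n).injOn)).card = r + 1 := by
        rw [card_preimage_castSucc _ hI.2, hI.1.2]
      rw [← minor_big_image B a aLast _ hJcard, image_preimage_castSucc _ hI.2]

theorem sum_DE {r n : ℕ} (B : Matrix (Fin r) (Fin n) ℤ)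
    (hB : ∀ l : Fin r, ∑ i : Fin n, B l i = 0)
    (a : Fin n → ℤ) (aLast : ℤ) (ha : (∑ i, a i) + aLast = 0) :
    ∑ J ∈ (univ : Finset (Fin n)).powersetCard (r + 1),
        minorOn (consM a B) J * minorOn (consM (fun _ => (1:ℤ)) B) J
      = -aLast * ∑ I ∈ (univ : Finset (Fin n)).powersetCard r, minorOn B I ^ 2 := by
  rw [← cauchy_binet]
  set P := consM a B * (consM (fun _ => (1:ℤ)) B)ᵀ with hP
  have hdet : P.det = -aLast * (B * Bᵀ).det := by
    rw [Matrix.det_succ_column_zero]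
    rw [Finset.sum_eq_single 0 ?_ (by simp)]
    · have h00 : P 0 0 = -aLast := by
        simp only [hP, Matrix.mul_apply, Matrix.transpose_apply, consM, Matrix.of_apply,
          Fin.cons_zero]
        show ∑ j, a j * (1:ℤ) = -aLast
        simp only [mul_one]
        omega
      have hsub : P.submatrix (Fin.succAbove 0) Fin.succ = B * Bᵀ := by
        ext l k
        simp [hP, Matrix.submatrix_apply, Matrix.mul_apply, Matrix.transpose_apply, consM]
        rfl
      rw [h00, hsub]
      simp
    · intro i _ hi
      obtain ⟨l, rfl⟩ := Fin.exists_succ_eq.mpr hi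
      have : P l.succ 0 = 0 := by
        simp only [hP, Matrix.mul_apply, Matrix.transpose_apply, consM, Matrix.of_apply,
          Fin.cons_succ, Fin.cons_zero, mul_one]
        show ∑ j, B l j * (1:ℤ) = 0
        simpa using hB l
      rw [this, mul_zero, zero_mul]
  rw [hdet, cauchy_binet]
  congr 1
  refine Finset.sum_congr rfl fun I _ => ?_
  ring

theorem consM_def {r n : ℕ} (u : Fin n → ℤ) (B : Matrix (Fin r) (Fin n) ℤ) :
    (Matrix.of (Fin.cons u B) : Matrix (Fin (r+1)) (Fin n) ℤ) = consM u B := rfl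

set_option maxHeartbeats 1000000 in
/-- the leading-term recurrence
L(r, n+1, A) = a_{n+1}² · L(r−1, n, B) − Σᵢ L(r, n, A(i)) for A of the special form with
first row (a₁,…,aₙ,a_{n+1}), bottom-left block B, and last column (a_{n+1},0,…,0)ᵀ. -/
theorem leading_term_recurrence
    (r n : ℕ) (hn : 1 ≤ n)
    (B : Matrix (Fin r) (Fin n) ℤ)
    (hB : ∀ l : Fin r, ∑ i : Fin n, B l i = 0)
    (a : Fin n → ℤ) (aLast : ℤ) (ha : (∑ i, a i) + aLast = 0) :
    Lterm (Matrix.of (Fin.cons (Fin.snoc a aLast) (fun i : Fin r => Fin.snoc (B i) 0))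
        : Matrix (Fin (r + 1)) (Fin (n + 1)) ℤ)
      = (aLast : ℚ) ^ 2 * Lterm B
        - ∑ i : Fin n,
            Lterm (Matrix.of (Fin.cons (fun j => if j = i then a j + aLast else a j) B)
              : Matrix (Fin (r + 1)) (Fin n) ℤ) := by
  classical
  have hrow : ∀ i : Fin n,
      (fun j => if j = i then a j + aLast else a j) = a + aLast • chi i := by
    intro i; funext j
    by_cases h : j = i <;> simp [chi, h]
  set T := ∑ I ∈ (univ : Finset (Fin n)).powersetCard r, minorOn B I ^ 2 with hTdef
  set S := ∑ J ∈ (univ : Finset (Fin n)).powersetCard (r+1), minorOn (consM a B) J ^ 2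
    with hSdef
  have h1 := sum_minor_split B a aLast
  -- the A(i) sum identity over ℤ
  have h2 : ∑ i : Fin n, ∑ J ∈ (univ : Finset (Fin n)).powersetCard (r+1),
      minorOn (Matrix.of (Fin.cons (fun j => if j = i then a j + aLast else a j) B)
        : Matrix (Fin (r + 1)) (Fin n) ℤ) J ^ 2
      = (n : ℤ) * S + aLast ^ 2 * ((n : ℤ) - (r : ℤ) - 2) * T := by
    simp_rw [hrow, consM_def]
    have hdec : ∀ (i : Fin n) (J : Finset (Fin n)),
        minorOn (consM (a + aLast • chi i) B) J
          = minorOn (consM a B) J + aLast * minorOn (consM (chi i) B) J := by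
      intro i J
      rw [minor_cons_add, minor_cons_smul]
    simp_rw [hdec]
    have e1 : ∀ i : Fin n, ∑ J ∈ (univ : Finset (Fin n)).powersetCard (r+1),
        (minorOn (consM a B) J + aLast * minorOn (consM (chi i) B) J) ^ 2
        = S + 2 * aLast * (∑ J ∈ (univ : Finset (Fin n)).powersetCard (r+1),
            minorOn (consM a B) J * minorOn (consM (chi i) B) J)
          + aLast ^ 2 * (∑ J ∈ (univ : Finset (Fin n)).powersetCard (r+1),
            minorOn (consM (chi i) B) J ^ 2) := by
      intro i
      rw [hSdef, Finset.mul_sum, Finset.mul_sum, ← Finset.sum_add_distrib,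
        ← Finset.sum_add_distrib]
      refine Finset.sum_congr rfl fun J _ => ?_
      ring
    simp_rw [e1, Finset.sum_add_distrib]
    -- three sums
    have t1 : ∑ _i : Fin n, S = (n : ℤ) * S := by
      rw [Finset.sum_const, Finset.card_univ, Fintype.card_fin, nsmul_eq_mul]
    have t2 : ∑ i : Fin n, 2 * aLast * (∑ J ∈ (univ : Finset (Fin n)).powersetCard (r+1),
        minorOn (consM a B) J * minorOn (consM (chi i) B) J)
        = 2 * aLast * (-aLast * T) := by
      rw [← Finset.mul_sum]
      congr 1
      rw [Finset.sum_comm]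
      have : ∀ J ∈ (univ : Finset (Fin n)).powersetCard (r+1),
          ∑ i : Fin n, minorOn (consM a B) J * minorOn (consM (chi i) B) J
            = minorOn (consM a B) J * minorOn (consM (fun _ => (1:ℤ)) B) J := by
        intro J _
        rw [← Finset.mul_sum, ← minor_cons_sum, sum_chi]
      rw [Finset.sum_congr rfl this, sum_DE B hB a aLast ha, hTdef]
    have t3 : ∑ i : Fin n, aLast ^ 2 * (∑ J ∈ (univ : Finset (Fin n)).powersetCard (r+1),
        minorOn (consM (chi i) B) J ^ 2)
        = aLast ^ 2 * (((n : ℤ) - (r : ℤ)) * T) := by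
      rw [← Finset.mul_sum]
      congr 1
      rw [Finset.sum_comm]
      have step : ∀ J ∈ (univ : Finset (Fin n)).powersetCard (r+1),
          ∑ i : Fin n, minorOn (consM (chi i) B) J ^ 2
            = ∑ i ∈ J, minorOn B (J.erase i) ^ 2 := by
        intro J hJ
        have hJc : J.card = r + 1 := (Finset.mem_powersetCard.mp hJ).2
        rw [← Finset.sum_subset (Finset.subset_univ J) (fun i _ hi => by
          rw [minor_cons_chi_not_mem B hi]; ring)]
        refine Finset.sum_congr rfl fun i hi => ?_
        exact minor_cons_chi_sq B hJc hi
      rw [Finset.sum_congr rfl step, counting, ← Finset.mul_sum]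
    rw [t1, t2, t3]
    ring
  -- now the rational computation
  simp only [Lterm]
  have cA : ∑ I ∈ (univ : Finset (Fin (n+1))).powersetCard (r+1),
      ((minorOn (Matrix.of (Fin.cons (Fin.snoc a aLast) (fun i : Fin r => Fin.snoc (B i) 0))
        : Matrix (Fin (r + 1)) (Fin (n + 1)) ℤ) I : ℤ) : ℚ) ^ 2
      = ((S + aLast ^ 2 * T : ℤ) : ℚ) := by
    rw [← h1]
    push_cast
    rfl
  have cAi : ∑ i : Fin n, ∑ J ∈ (univ : Finset (Fin n)).powersetCard (r+1),
      ((minorOn (Matrix.of (Fin.cons (fun j => if j = i then a j + aLast else a j) B)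
        : Matrix (Fin (r + 1)) (Fin n) ℤ) J : ℤ) : ℚ) ^ 2
      = (((n : ℤ) * S + aLast ^ 2 * ((n : ℤ) - (r : ℤ) - 2) * T : ℤ) : ℚ) := by
    rw [← h2]
    push_cast
    rfl
  have cB : ∑ I ∈ (univ : Finset (Fin n)).powersetCard r, ((minorOn B I : ℤ) : ℚ) ^ 2
      = ((T : ℤ) : ℚ) := by
    rw [hTdef]
    push_cast
    rfl
  rw [cA, cB, ← Finset.mul_sum, cAi]
  have hn0 : 0 < n := hn
  have hfac1 : (((n + 1 - 1).factorial : ℕ) : ℚ) = (n : ℚ) * ((n-1).factorial : ℚ) := by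
    rw [Nat.add_sub_cancel, ← Nat.mul_factorial_pred hn0.ne']
    push_cast
    ring
  have hfac2 : ((((r+1) + 1).factorial : ℕ) : ℚ) = ((r : ℚ) + 2) * ((r+1).factorial : ℚ) := by
    rw [Nat.factorial_succ]
    push_cast
    ring
  have hs1 : (-1 : ℚ) ^ (n + 1 + (r + 1)) = (-1 : ℚ) ^ (n + r) := by
    rw [show n + 1 + (r + 1) = (n + r) + 2 by ring, pow_add]
    norm_num
  have hs2 : (-1 : ℚ) ^ (n + (r + 1)) = -(-1 : ℚ) ^ (n + r) := by
    rw [show n + (r + 1) = (n + r) + 1 by ring, pow_succ]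
    ring
  rw [hfac1, hfac2, hs1, hs2]
  have hne1 : ((r+1).factorial : ℚ) ≠ 0 := by
    exact_mod_cast Nat.factorial_ne_zero (r+1)
  have hne2 : ((r : ℚ) + 2) ≠ 0 := by positivity
  push_cast
  field_simp
  ring
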